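/- Let p be an odd prime, let n ≥ p + 4 be an integer, and let G = 2.A_n be the double cover of the alternating group, with projection π : G → A_n and central element z of order 2. Let g ∈ G be an element such that π(g) has cycle type (p, 2, 2, 1^{n−p−4}). Then every irreducible complex character χ of G with χ(z) ≠ χ(1) satisfies χ(g) = 0. -/

import Mathlib

/-! Double covers `2^α.S_n` of the symmetric groups, via the presentation with
generators `z, t_1, …, t_{n-1}` and relations `z² = 1`, `t_j² = z^α`,
`(t_j t_{j+1})³ = z^α`, `[z, t_j] = 1`, and `t_j t_k = z t_k t_j` for `|j - k| > 1`.
Here `α = 0` gives `2^+.S_n` and `α = 1` gives `2^-.S_n`. -/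

namespace DoubleCover

/-- Generators: `Sum.inl ()` is `z`; `Sum.inr j` is `t_{j+1}` for `j : Fin (n - 1)`. -/
abbrev Gen (n : ℕ) := Unit ⊕ Fin (n - 1)

/-- The word `z` in the free group on the generators. -/
def zw (n : ℕ) : FreeGroup (Gen n) := FreeGroup.of (Sum.inl ())

/-- The word `t_{j+1}` in the free group on the generators. -/
def tw (n : ℕ) (j : Fin (n - 1)) : FreeGroup (Gen n) := FreeGroup.of (Sum.inr j)

/-- The relations of the presentation of `2^α.S_n`. -/
def rels (n α : ℕ) : Set (FreeGroup (Gen n)) :=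
  {r | r = zw n ^ 2
    ∨ (∃ j, r = tw n j ^ 2 * (zw n ^ α)⁻¹)
    ∨ (∃ j k : Fin (n - 1), (j : ℕ) + 1 = (k : ℕ) ∧
        r = (tw n j * tw n k) ^ 3 * (zw n ^ α)⁻¹)
    ∨ (∃ j, r = zw n * tw n j * (zw n)⁻¹ * (tw n j)⁻¹)
    ∨ (∃ j k : Fin (n - 1), 1 < Nat.dist (j : ℕ) (k : ℕ) ∧
        r = tw n j * tw n k * (zw n * tw n k * tw n j)⁻¹)}

/-- The double cover `2^α.S_n` of the symmetric group `S_n`. -/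
abbrev Cover (n α : ℕ) := PresentedGroup (rels n α)

/-- The central element `z` of `2^α.S_n`. -/
def z (n α : ℕ) : Cover n α := PresentedGroup.of (Sum.inl ())

/-- The generator `t_{j+1}` of `2^α.S_n`, lifting the transposition `(j+1, j+2)`. -/
def t (n α : ℕ) (j : Fin (n - 1)) : Cover n α := PresentedGroup.of (Sum.inr j)

end DoubleCover

namespace DoubleCover

variable {n α : ℕ}


theorem rel_eq_one {r : FreeGroup (Gen n)} (hr : r ∈ rels n α) :
    PresentedGroup.mk (rels n α) r = 1 := by
  rw [PresentedGroup.mk]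
  show (QuotientGroup.mk r : PresentedGroup (rels n α)) = 1
  rw [QuotientGroup.eq_one_iff]
  exact Subgroup.subset_normalClosure hr

theorem z_sq : z n α * z n α = 1 := by
  have := rel_eq_one (n := n) (α := α) (Or.inl rfl)
  rw [map_pow] at this
  rw [← pow_two]
  exact this

theorem t_sq (j : Fin (n - 1)) : t n α j * t n α j = z n α ^ α := by
  have := rel_eq_one (n := n) (α := α) (Or.inr (Or.inl ⟨j, rfl⟩))
  rw [map_mul, map_inv, map_pow, map_pow, mul_inv_eq_one] at this
  rw [← pow_two]
  exact this

theorem braid_pow (j k : Fin (n - 1)) (h : (j : ℕ) + 1 = (k : ℕ)) :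
    (t n α j * t n α k) ^ 3 = z n α ^ α := by
  have := rel_eq_one (n := n) (α := α) (Or.inr (Or.inr (Or.inl ⟨j, k, h, rfl⟩)))
  rw [map_mul, map_inv, map_pow, map_pow, map_mul, mul_inv_eq_one] at this
  exact this

theorem z_t_comm (j : Fin (n - 1)) : z n α * t n α j = t n α j * z n α := by
  have := rel_eq_one (n := n) (α := α) (Or.inr (Or.inr (Or.inr (Or.inl ⟨j, rfl⟩))))
  simp only [map_mul, map_inv] at this
  rw [mul_inv_eq_one, mul_inv_eq_iff_eq_mul] at this
  exact this

theorem t_anticomm (j k : Fin (n - 1)) (h : 1 < Nat.dist (j : ℕ) (k : ℕ)) :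
    t n α j * t n α k = z n α * (t n α k * t n α j) := by
  have := rel_eq_one (n := n) (α := α) (Or.inr (Or.inr (Or.inr (Or.inr ⟨j, k, h, rfl⟩))))
  simp only [map_mul, map_inv] at this
  rw [mul_inv_eq_one] at this
  show PresentedGroup.mk (rels n α) (tw n j) * PresentedGroup.mk (rels n α) (tw n k) = _
  rw [this, mul_assoc]
  rfl

theorem z_central (x : Cover n α) : z n α * x = x * z n α := by
  have hx : x ∈ Subgroup.centralizer {z n α} := by
    have : x ∈ (⊤ : Subgroup (Cover n α)) := trivial
    rw [← PresentedGroup.closure_range_of (rels n α)] at this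
    refine Subgroup.closure_le (Subgroup.centralizer {z n α}) |>.mpr ?_ this
    rintro y ⟨i, rfl⟩
    rw [SetLike.mem_coe, Subgroup.mem_centralizer_iff]
    rintro w rfl0
    rcases i with i | j
    · cases rfl0; rfl
    · cases rfl0; exact z_t_comm j
  exact Subgroup.mem_centralizer_iff.mp hx (z n α) rfl



end DoubleCover


section Helpers
open Equiv Equiv.Perm


theorem cycleRange_succ_right {m : ℕ} (k : ℕ) (hk : k < m) :
    Fin.cycleRange (⟨k+1, by omega⟩ : Fin (m+1)) =
    Fin.cycleRange (⟨k, by omega⟩ : Fin (m+1)) * Equiv.swap ⟨k, by omega⟩ ⟨k+1, by omega⟩ := by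
  ext x
  rw [Equiv.Perm.mul_apply]
  rcases lt_trichotomy (x : ℕ) k with h | h | h
  · rw [Equiv.swap_apply_of_ne_of_ne (Fin.ne_of_val_ne (by simpa using by omega))
      (Fin.ne_of_val_ne (by simpa using by omega)),
      Fin.cycleRange_of_lt (by simp [Fin.lt_def]; omega),
      Fin.cycleRange_of_lt (by simp [Fin.lt_def]; omega)]
  · have hx : x = ⟨k, by omega⟩ := Fin.ext (by simpa using h)
    rw [hx, Equiv.swap_apply_left,
      Fin.cycleRange_of_lt (show (⟨k, by omega⟩ : Fin (m+1)) < ⟨k+1, by omega⟩ by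
        simp [Fin.lt_def]),
      Fin.cycleRange_of_gt (show (⟨k, by omega⟩ : Fin (m+1)) < ⟨k+1, by omega⟩ by
        simp [Fin.lt_def])]
    rw [Fin.val_add_one_of_lt (by simp [Fin.lt_def]; omega)]
  · rcases Nat.eq_or_lt_of_le (Nat.succ_le_of_lt h) with h1 | h1
    · have hx : x = ⟨k+1, by omega⟩ := Fin.ext (by simpa using h1.symm)
      rw [hx, Equiv.swap_apply_right, Fin.cycleRange_self,
        Fin.cycleRange_of_eq rfl]
    · rw [Equiv.swap_apply_of_ne_of_ne (Fin.ne_of_val_ne (by simpa using by omega))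
        (Fin.ne_of_val_ne (by simpa using by omega)),
        Fin.cycleRange_of_gt (by simp [Fin.lt_def]; omega),
        Fin.cycleRange_of_gt (by simp [Fin.lt_def]; omega)]

theorem prod_swapList (m : ℕ) (k : ℕ) (hk : k ≤ m) :
    ((List.range k).map (fun i =>
        Equiv.swap (⟨min i m, by omega⟩ : Fin (m+1)) ⟨min (i+1) m, by omega⟩)).prod
      = Fin.cycleRange ⟨k, by omega⟩ := by
  induction k with
  | zero => simp [Fin.cycleRange_zero]
  | succ k ih =>
    rw [List.range_succ, List.map_append, List.prod_append, ih (by omega)]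
    simp only [List.map_cons, List.map_nil, List.prod_cons, List.prod_nil, mul_one]
    rw [cycleRange_succ_right k (by omega)]
    congr 2 <;> exact Fin.ext (by simp; omega)

theorem mul_list_prod_anticomm {G : Type*} [Group G] (z x : G) (L : List G)
    (h : ∀ y ∈ L, x * y = z * (y * x)) (hzc : ∀ w, z * w = w * z) :
    x * L.prod = z ^ L.length * (L.prod * x) := by
  induction L with
  | nil => simp
  | cons y L ih =>
    have hy := h y (List.mem_cons_self (a := y) (l := L))
    have ih' := ih (fun y' hy' => h y' (List.mem_cons_of_mem _ hy'))
    have hzn : ∀ w : G, z ^ L.length * w = w * z ^ L.length := fun w =>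
      (Commute.pow_left (hzc w) L.length)
    calc x * (y * L.prod) = (x * y) * L.prod := by rw [mul_assoc]
      _ = z * (y * (x * L.prod)) := by rw [hy]; simp only [mul_assoc]
      _ = z * (y * (z ^ L.length * (L.prod * x))) := by rw [ih']
      _ = z * (z ^ L.length * (y * (L.prod * x))) := by
            rw [← mul_assoc y, ← hzn y, mul_assoc]
      _ = z ^ (L.length + 1) * ((y * L.prod) * x) := by
            rw [pow_succ, hzn z]
            simp only [mul_assoc]
    



theorem cycleType_sigma0 {m : ℕ} (p : ℕ) (hp2 : 2 ≤ p) (hpm : p + 3 ≤ m) :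
    (Fin.cycleRange (⟨p-1, by omega⟩ : Fin (m+1)) *
      (Equiv.swap (⟨p, by omega⟩ : Fin (m+1)) ⟨p+1, by omega⟩ *
       Equiv.swap (⟨p+2, by omega⟩ : Fin (m+1)) ⟨p+3, by omega⟩)).cycleType
    = {p, 2, 2} := by
  have vne : ∀ (a : Fin (m+1)) (q : ℕ) (hq : q < m+1), (a : ℕ) ≠ q → a ≠ ⟨q, hq⟩ :=
    fun a q hq h => Fin.ne_of_val_ne (by simpa using h)
  have mne : ∀ (q r : ℕ) (hq : q < m+1) (hr : r < m+1), q ≠ r →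
      (⟨q, hq⟩ : Fin (m+1)) ≠ ⟨r, hr⟩ := fun q r hq hr h => Fin.ne_of_val_ne (by simpa using h)
  have hne1 : (⟨p, by omega⟩ : Fin (m+1)) ≠ ⟨p+1, by omega⟩ := mne _ _ _ _ (by omega)
  have hne2 : (⟨p+2, by omega⟩ : Fin (m+1)) ≠ ⟨p+3, by omega⟩ := mne _ _ _ _ (by omega)
  have d2 : Disjoint (Equiv.swap (⟨p, by omega⟩ : Fin (m+1)) ⟨p+1, by omega⟩)
      (Equiv.swap (⟨p+2, by omega⟩ : Fin (m+1)) ⟨p+3, by omega⟩) := by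
    intro x
    by_cases hx : (x : ℕ) = p ∨ (x : ℕ) = p + 1
    · right
      exact Equiv.swap_apply_of_ne_of_ne (vne _ _ _ (by omega)) (vne _ _ _ (by omega))
    · left
      exact Equiv.swap_apply_of_ne_of_ne (vne _ _ _ (by omega)) (vne _ _ _ (by omega))
  have d1 : Disjoint (Fin.cycleRange (⟨p-1, by omega⟩ : Fin (m+1)))
      (Equiv.swap (⟨p, by omega⟩ : Fin (m+1)) ⟨p+1, by omega⟩ *
       Equiv.swap (⟨p+2, by omega⟩ : Fin (m+1)) ⟨p+3, by omega⟩) := by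
    intro x
    by_cases hx : (x : ℕ) ≤ p - 1
    · right
      rw [Equiv.Perm.mul_apply,
        Equiv.swap_apply_of_ne_of_ne (vne x (p+2) (by omega) (by omega))
          (vne x (p+3) (by omega) (by omega)),
        Equiv.swap_apply_of_ne_of_ne (vne x p (by omega) (by omega))
          (vne x (p+1) (by omega) (by omega))]
    · left
      exact Fin.cycleRange_of_gt (by simp [Fin.lt_def]; omega)
  rw [d1.cycleType_mul, d2.cycleType_mul, Fin.cycleType_cycleRange (Fin.ne_of_val_ne (by simp; omega)),
    (isCycle_swap hne1).cycleType, (isCycle_swap hne2).cycleType,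
    Equiv.Perm.card_support_swap hne1, Equiv.Perm.card_support_swap hne2]
  have hv : ((⟨p-1, by omega⟩ : Fin (m+1)) : ℕ) + 1 = p := by simp; omega
  rw [hv]
  rfl



theorem key_eq {G : Type*} [Group G] (z ζ a b c : G)
    (hzc : ∀ x : G, z * x = x * z) (hζc : ∀ x : G, ζ * x = x * ζ)
    (hz2 : z * z = 1)
    (ha : a * a = ζ) (hb : b * b = ζ) (hc : c * c = ζ)
    (hab : a * b * a = b * a * b) (hbc : b * c * b = c * b * c)
    (hac : a * c = z * (c * a)) :
    (b * a * b * (c * b * c)) * (a * c) = z * ((a * c) * (b * a * b * (c * b * c))) := by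
  have bub : ∀ w : G, (z * w = w * z) → ∀ x : G, w * (z * x) = z * (w * x) := by
    intro w h x; rw [← mul_assoc, ← h, mul_assoc]
  have bubζ : ∀ w : G, ∀ x : G, w * (ζ * x) = ζ * (w * x) := by
    intro w x; rw [← mul_assoc, ← hζc w, mul_assoc]
  have hza := bub a (hzc a); have hzb := bub b (hzc b); have hzcc := bub c (hzc c)
  have hζa := bubζ a; have hζb := bubζ b; have hζcc := bubζ c
  have hζz : ∀ x : G, ζ * (z * x) = z * (ζ * x) := by
    intro x; rw [← mul_assoc, hζc z, mul_assoc]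
  have hz2' : ∀ x : G, z * (z * x) = x := by intro x; rw [← mul_assoc, hz2, one_mul]
  have hca : ∀ x : G, c * (a * x) = z * (a * (c * x)) := by
    intro x
    have h2 : c * a = z * (a * c) := by rw [hac, ← mul_assoc, ← mul_assoc, hz2, one_mul]
    rw [← mul_assoc, h2, mul_assoc, mul_assoc]
  have hac' : ∀ x : G, a * (c * x) = z * (c * (a * x)) := by
    intro x; rw [← mul_assoc, hac, mul_assoc, mul_assoc]
  have hab' : ∀ x : G, a * (b * (a * x)) = b * (a * (b * x)) := by
    intro x; simp only [← mul_assoc]; rw [hab]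
  have hbc' : ∀ x : G, b * (c * (b * x)) = c * (b * (c * x)) := by
    intro x; simp only [← mul_assoc]; rw [hbc]
  have hb' : ∀ x : G, b * (b * x) = ζ * x := by intro x; rw [← mul_assoc, hb]
  have hcbc0 : c * (b * c) = b * (c * b) := by simp only [← mul_assoc]; rw [hbc]
  simp only [mul_assoc]
  conv_lhs => rw [← hbc', hb', hζa, hζb, hac', hzb, hζz, hab', hbc', hca, hzb, hzcc, hζz,
    hz2', hcbc0, ← hab', hca, hζz]
  conv_rhs => rw [hbc', hc, ← hζc, hζcc, hζa, hζb, hζcc, hζa]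

theorem braid_of {G : Type*} [Group G] (ζ a b : G)
    (hζa : ζ * a = a * ζ) (hζb : ζ * b = b * ζ) (hζ2 : ζ * ζ = 1)
    (ha : a * a = ζ) (hb : b * b = ζ) (h3 : a * b * (a * b) * (a * b) = ζ) :
    a * b * a = b * a * b := by
  have e1 : (a * b * a) * (b * a * b) = ζ := by rw [← h3]; simp only [mul_assoc]
  have e2 : (b * a * b) * (b * a * b) = ζ := by
    calc (b * a * b) * (b * a * b) = b * (a * (b * (b * (a * b)))) := by simp only [mul_assoc]
      _ = b * (a * (ζ * (a * b))) := by rw [← mul_assoc b b, hb]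
      _ = b * (ζ * (a * (a * b))) := by rw [← mul_assoc a ζ, ← hζa, mul_assoc]
      _ = b * (ζ * (ζ * b)) := by rw [← mul_assoc a a, ha]
      _ = ζ * (b * (ζ * b)) := by rw [← mul_assoc b ζ, ← hζb, mul_assoc]
      _ = ζ * (ζ * (b * b)) := by rw [← mul_assoc b ζ b, ← hζb, mul_assoc]
      _ = ζ := by rw [hb, hζ2, mul_one]
  exact mul_right_cancel (e1.trans e2.symm)

end Helpers

open Equiv Equiv.Perm in
theorem exists_conj_elt (m α p : ℕ) (hα : α = 0 ∨ α = 1) (hpodd : Odd p) (hp2 : 2 ≤ p)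
    (hm : p + 3 ≤ m)
    (π : DoubleCover.Cover (m+1) α →* Equiv.Perm (Fin (m+1)))
    (hπt : ∀ j : Fin (m+1-1), π (DoubleCover.t (m+1) α j) =
      Equiv.swap (Fin.castLE (by omega) j) (Fin.castLE (by omega) j.succ)) :
    ∃ Yw g₀ : DoubleCover.Cover (m+1) α,
      Yw * g₀ * Yw⁻¹ = DoubleCover.z (m+1) α * g₀ ∧
      (π g₀).cycleType = {p, 2, 2} ∧ Equiv.Perm.sign (π Yw) = 1 := by
  classical
  have zc : ∀ x, DoubleCover.z (m+1) α * x = x * DoubleCover.z (m+1) α :=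
    DoubleCover.z_central
  set Z := DoubleCover.z (m+1) α with hZdef
  have z2 : Z * Z = 1 := DoubleCover.z_sq
  set ζ := Z ^ α with hζdef
  have cz : ∀ x, Commute Z x := fun x => zc x
  have ζc : ∀ x, ζ * x = x * ζ := fun x => ((cz x).pow_left α).eq
  have ζ2 : ζ * ζ = 1 := by
    rcases hα with rfl | rfl
    · simp [hζdef]
    · rw [hζdef, pow_one]; exact z2
  have hlt1 : p < m + 1 - 1 := by omega
  have hlt2 : p + 1 < m + 1 - 1 := by omega
  have hlt3 : p + 2 < m + 1 - 1 := by omega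
  set A := DoubleCover.t (m+1) α ⟨p, hlt1⟩ with hAdef
  set B := DoubleCover.t (m+1) α ⟨p+1, hlt2⟩ with hBdef
  set C := DoubleCover.t (m+1) α ⟨p+2, hlt3⟩ with hCdef
  have hA2 : A * A = ζ := DoubleCover.t_sq _
  have hB2 : B * B = ζ := DoubleCover.t_sq _
  have hC2 : C * C = ζ := DoubleCover.t_sq _
  have h3AB : A * B * (A * B) * (A * B) = ζ := by
    have h := DoubleCover.braid_pow (n := m+1) (α := α) ⟨p, hlt1⟩ ⟨p+1, hlt2⟩ rfl
    rw [pow_succ, pow_succ, pow_one] at h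
    exact h
  have h3BC : B * C * (B * C) * (B * C) = ζ := by
    have h := DoubleCover.braid_pow (n := m+1) (α := α) ⟨p+1, hlt2⟩ ⟨p+2, hlt3⟩ rfl
    rw [pow_succ, pow_succ, pow_one] at h
    exact h
  have hABA : A * B * A = B * A * B := braid_of ζ A B (ζc A) (ζc B) ζ2 hA2 hB2 h3AB
  have hBCB : B * C * B = C * B * C := braid_of ζ B C (ζc B) (ζc C) ζ2 hB2 hC2 h3BC
  have hAC : A * C = Z * (C * A) := by
    refine DoubleCover.t_anticomm _ _ ?_
    show 1 < Nat.dist p (p+2)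
    simp only [Nat.dist]; omega
  have keyYX : (B * A * B * (C * B * C)) * (A * C)
      = Z * ((A * C) * (B * A * B * (C * B * C))) :=
    key_eq Z ζ A B C zc ζc z2 hA2 hB2 hC2 hABA hBCB hAC
  -- the p-cycle word
  set tf : ℕ → DoubleCover.Cover (m+1) α :=
    fun i => DoubleCover.t (m+1) α ⟨min i (m-1), by omega⟩ with htfdef
  set L := (List.range (p-1)).map tf with hLdef
  have hlen : L.length = p - 1 := by rw [hLdef]; simp
  have hanti : ∀ x : Fin (m+1-1), (p ≤ (x:ℕ)) → ∀ y ∈ L,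
      DoubleCover.t (m+1) α x * y = Z * (y * DoubleCover.t (m+1) α x) := by
    intro x hx y hy
    rw [hLdef] at hy
    obtain ⟨i, hi, rfl⟩ := List.mem_map.mp hy
    have hi' : i < p - 1 := List.mem_range.mp hi
    have htfi : tf i = DoubleCover.t (m+1) α ⟨i, by omega⟩ := by
      rw [htfdef]; beta_reduce; congr 1
      apply Fin.ext
      show i ⊓ (m-1) = i
      omega
    rw [htfi]
    refine DoubleCover.t_anticomm _ _ ?_
    show 1 < Nat.dist (x:ℕ) i
    simp only [Nat.dist]; omega
  have zp1 : Z ^ (p-1) = 1 := by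
    obtain ⟨q, hq⟩ := hpodd
    have hpq : p - 1 = 2 * q := by omega
    have hz2' : Z ^ 2 = 1 := by rw [pow_two]; exact z2
    rw [hpq, pow_mul, hz2', one_pow]
  have commA : A * L.prod = L.prod * A := by
    have h := mul_list_prod_anticomm Z A L (hanti ⟨p, hlt1⟩ (le_refl p)) zc
    rw [hlen, zp1, one_mul] at h; exact h
  have commB : B * L.prod = L.prod * B := by
    have h := mul_list_prod_anticomm Z B L (hanti ⟨p+1, hlt2⟩ (by show p ≤ p+1; omega)) zc
    rw [hlen, zp1, one_mul] at h; exact h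
  have commC : C * L.prod = L.prod * C := by
    have h := mul_list_prod_anticomm Z C L (hanti ⟨p+2, hlt3⟩ (by show p ≤ p+2; omega)) zc
    rw [hlen, zp1, one_mul] at h; exact h
  have cY : Commute (B * A * B * (C * B * C)) L.prod := by
    have cA : Commute A L.prod := commA
    have cB : Commute B L.prod := commB
    have cC : Commute C L.prod := commC
    exact ((cB.mul_left cA).mul_left cB).mul_left ((cC.mul_left cB).mul_left cC)
  have goal1 : (B * A * B * (C * B * C)) * (L.prod * (A * C)) * (B * A * B * (C * B * C))⁻¹
      = Z * (L.prod * (A * C)) := by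
    have h1 : (B * A * B * (C * B * C)) * (L.prod * (A * C))
        = Z * ((L.prod * (A * C)) * (B * A * B * (C * B * C))) := by
      calc (B * A * B * (C * B * C)) * (L.prod * (A * C))
          = ((B * A * B * (C * B * C)) * L.prod) * (A * C) := (mul_assoc _ _ _).symm
        _ = (L.prod * (B * A * B * (C * B * C))) * (A * C) := by rw [cY.eq]
        _ = L.prod * ((B * A * B * (C * B * C)) * (A * C)) := mul_assoc _ _ _
        _ = L.prod * (Z * ((A * C) * (B * A * B * (C * B * C)))) := by rw [keyYX]
        _ = Z * (L.prod * ((A * C) * (B * A * B * (C * B * C)))) := by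
              rw [← mul_assoc, ← zc L.prod, mul_assoc]
        _ = Z * ((L.prod * (A * C)) * (B * A * B * (C * B * C))) := by
              rw [← mul_assoc L.prod]
    rw [h1]
    group
  -- permutation images
  have hπA : π A = Equiv.swap (⟨p, by omega⟩ : Fin (m+1)) ⟨p+1, by omega⟩ := by
    rw [hAdef, hπt]
    congr 1
    all_goals exact Fin.ext (by simp)
  have hπB : π B = Equiv.swap (⟨p+1, by omega⟩ : Fin (m+1)) ⟨p+2, by omega⟩ := by
    rw [hBdef, hπt]
    congr 1
    all_goals exact Fin.ext (by simp)
  have hπC : π C = Equiv.swap (⟨p+2, by omega⟩ : Fin (m+1)) ⟨p+3, by omega⟩ := by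
    rw [hCdef, hπt]
    congr 1
    all_goals exact Fin.ext (by simp)
  have hπc0 : π L.prod = Fin.cycleRange (⟨p-1, by omega⟩ : Fin (m+1)) := by
    rw [hLdef, map_list_prod, List.map_map]
    rw [List.map_congr_left (g := fun i =>
        Equiv.swap (⟨min i m, by omega⟩ : Fin (m+1)) ⟨min (i+1) m, by omega⟩) ?_]
    · exact prod_swapList m (p-1) (by omega)
    · intro i hi
      have hi' : i < p - 1 := List.mem_range.mp hi
      show π (tf i) = _
      rw [htfdef, hπt]
      congr 1
      all_goals apply Fin.ext
      all_goals simp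
      all_goals omega
  have goal2 : (π (L.prod * (A * C))).cycleType = {p, 2, 2} := by
    rw [map_mul, map_mul, hπc0, hπA, hπC]
    exact cycleType_sigma0 p hp2 hm
  have goal3 : Equiv.Perm.sign (π (B * A * B * (C * B * C))) = 1 := by
    have s1 : Equiv.Perm.sign (Equiv.swap (⟨p, by omega⟩ : Fin (m+1)) ⟨p+1, by omega⟩)
        = -1 := Equiv.Perm.sign_swap (Fin.ne_of_val_ne (by simp))
    have s2 : Equiv.Perm.sign (Equiv.swap (⟨p+1, by omega⟩ : Fin (m+1)) ⟨p+2, by omega⟩)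
        = -1 := Equiv.Perm.sign_swap (Fin.ne_of_val_ne (by simp))
    have s3 : Equiv.Perm.sign (Equiv.swap (⟨p+2, by omega⟩ : Fin (m+1)) ⟨p+3, by omega⟩)
        = -1 := Equiv.Perm.sign_swap (Fin.ne_of_val_ne (by simp))
    simp only [map_mul, hπA, hπB, hπC, s1, s2, s3]
    decide
  exact ⟨_, _, goal1, goal2, goal3⟩

section CharAux
open CategoryTheory


theorem char_vanish {H : Type} [Group H] (V : FDRep ℂ H) (hV : Simple V)
    (z' g h : H) (hzc : ∀ x : H, z' * x = x * z')
    (hconj : h * g * h⁻¹ = z' * g)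
    (hfaith : V.character z' ≠ V.character 1) : V.character g = 0 := by
  haveI := hV
  have fex : ∃ f : V ⟶ V, f.hom.hom.hom = V.ρ z' := by
    refine ⟨⟨Action.ρ V z', ?_⟩, rfl⟩
    intro x
    show Action.ρ V z' * Action.ρ V x = Action.ρ V x * Action.ρ V z'
    rw [← map_mul, ← map_mul, hzc x]
  obtain ⟨f, hf⟩ := fex
  obtain ⟨c, hc⟩ := CategoryTheory.endomorphism_simple_eq_smul_id ℂ f
  have hρ : V.ρ z' = c • LinearMap.id := by
    have h2 := congrArg (fun φ : V ⟶ V => φ.hom.hom.hom) hc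
    simp only [Action.smul_hom, hf] at h2
    rw [← h2]
    rfl
  have hchar1 : V.character (z' * g) = c * V.character g := by
    simp only [FDRep.character, map_mul, hρ]
    rw [smul_mul_assoc, map_smul, smul_eq_mul, ← Module.End.one_eq_id, one_mul]
  have hchar2 : V.character z' = c * V.character 1 := by
    simp only [FDRep.character, hρ, map_one]
    rw [map_smul, smul_eq_mul, Module.End.one_eq_id]
  have e1 : V.character g = c * V.character g := by
    rw [← hchar1, ← hconj, FDRep.char_conj]
  have hc1 : c ≠ 1 := by
    intro h1
    exact hfaith (by rw [hchar2, h1, one_mul])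
  have e2 : (c - 1) * V.character g = 0 := by
    rw [sub_mul, one_mul, ← e1, sub_self]
  exact (mul_eq_zero.mp e2).resolve_left (sub_ne_zero.mpr hc1)

end CharAux


/-- A subgroup is an elementary abelian 2-subgroup iff every element squares to `1`
(this forces it to be abelian). -/
def IsElemAbelianTwo {G : Type*} [Group G] (E : Subgroup G) : Prop :=
  ∀ x ∈ E, x ^ 2 = 1

/-- Let `p` be an odd prime, `n ≥ p + 4`, and `G = 2.A_n = π⁻¹(A_n)`
with central element `z` of order 2. If `g ∈ G` projects to a permutation of cycle type
`(p, 2, 2, 1^{n-p-4})`, then every irreducible complex character `χ` of `G` with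
`χ(z) ≠ χ(1)` vanishes at `g`. -/
theorem faithful_char_vanishes_cover_An
    (p : ℕ) (hp : p.Prime) (hpodd : Odd p)
    (n : ℕ) (hn : p + 4 ≤ n) (α : ℕ) (hα : α = 0 ∨ α = 1)
    (π : DoubleCover.Cover n α →* Equiv.Perm (Fin n))
    (hπt : ∀ j : Fin (n - 1), π (DoubleCover.t n α j) =
      Equiv.swap (Fin.castLE (by omega) j) (Fin.castLE (by omega) j.succ))
    (hπsurj : Function.Surjective π)
    (hπker : π.ker = Subgroup.zpowers (DoubleCover.z n α))
    (hz : orderOf (DoubleCover.z n α) = 2)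
    (z' : ↥(Subgroup.comap π (alternatingGroup (Fin n))))
    (hz' : (z' : DoubleCover.Cover n α) = DoubleCover.z n α)
    (g : ↥(Subgroup.comap π (alternatingGroup (Fin n))))
    (hg : (π (g : DoubleCover.Cover n α)).cycleType = {p, 2, 2})
    (V : FDRep ℂ ↥(Subgroup.comap π (alternatingGroup (Fin n))))
    (hV : CategoryTheory.Simple V)
    (hfaith : V.character z' ≠ V.character 1) :
    V.character g = 0 := by
  classical
  obtain ⟨m, rfl⟩ : ∃ m, n = m + 1 := ⟨n - 1, by omega⟩
  have hp2 : 2 ≤ p := hp.two_le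
  obtain ⟨Yw, g0, hYg, hct, hsgn⟩ :=
    exists_conj_elt m α p hα hpodd hp2 (by omega) π (fun j => hπt j)
  have hconj : IsConj (π g0) (π (g : DoubleCover.Cover (m+1) α)) :=
    Equiv.Perm.isConj_iff_cycleType_eq.mpr (hct.trans hg.symm)
  obtain ⟨ρ, hρ⟩ := isConj_iff.mp hconj
  obtain ⟨r, hr⟩ := hπsurj ρ
  have zc : ∀ x, DoubleCover.z (m+1) α * x = x * DoubleCover.z (m+1) α :=
    DoubleCover.z_central
  have hker : (g : DoubleCover.Cover (m+1) α) * (r * g0 * r⁻¹)⁻¹ ∈ π.ker := by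
    rw [MonoidHom.mem_ker, map_mul, map_inv, map_mul, map_mul, map_inv, hr, hρ]
    exact mul_inv_cancel _
  rw [hπker] at hker
  obtain ⟨jz, hjz⟩ := Subgroup.mem_zpowers_iff.mp hker
  have hgeq : (g : DoubleCover.Cover (m+1) α)
      = DoubleCover.z (m+1) α ^ jz * (r * g0 * r⁻¹) := by
    rw [hjz]; group
  have zjc : ∀ w, DoubleCover.z (m+1) α ^ jz * w = w * DoubleCover.z (m+1) α ^ jz := by
    intro w
    have cw : Commute (DoubleCover.z (m+1) α) w := zc w
    exact (cw.zpow_left jz).eq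
  have hmain : (r * Yw * r⁻¹) * (g : DoubleCover.Cover (m+1) α) * (r * Yw * r⁻¹)⁻¹
      = DoubleCover.z (m+1) α * (g : DoubleCover.Cover (m+1) α) := by
    rw [hgeq]
    have h2 : (r * Yw * r⁻¹) * (DoubleCover.z (m+1) α ^ jz * (r * g0 * r⁻¹)) * (r * Yw * r⁻¹)⁻¹
        = DoubleCover.z (m+1) α ^ jz * (r * (Yw * g0 * Yw⁻¹) * r⁻¹) := by
      rw [← mul_assoc (r * Yw * r⁻¹), ← zjc (r * Yw * r⁻¹)]
      group
    rw [h2, hYg]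
    have h3 : r * (DoubleCover.z (m+1) α * g0) * r⁻¹
        = DoubleCover.z (m+1) α * (r * g0 * r⁻¹) := by
      rw [← mul_assoc r, ← zc r]; group
    rw [h3, ← mul_assoc, zjc, mul_assoc]
  have hmem : r * Yw * r⁻¹ ∈ Subgroup.comap π (alternatingGroup (Fin (m+1))) := by
    simp [Equiv.Perm.mem_alternatingGroup, map_mul, map_inv, hsgn]
  have hzc' : ∀ x : ↥(Subgroup.comap π (alternatingGroup (Fin (m+1)))),
      z' * x = x * z' := by
    intro x
    apply Subtype.ext
    rw [Subgroup.coe_mul, Subgroup.coe_mul, hz']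
    exact zc ↑x
  have hconjH : (⟨r * Yw * r⁻¹, hmem⟩ : ↥(Subgroup.comap π (alternatingGroup (Fin (m+1))))) * g
      * (⟨r * Yw * r⁻¹, hmem⟩ : ↥(Subgroup.comap π (alternatingGroup (Fin (m+1)))))⁻¹
      = z' * g := by
    apply Subtype.ext
    rw [Subgroup.coe_mul, Subgroup.coe_mul, InvMemClass.coe_inv, Subgroup.coe_mul, hz']
    exact hmain
  exact char_vanish V hV z' g ⟨r * Yw * r⁻¹, hmem⟩ hzc' hconjH hfaith
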